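/- arXiv:1405.6076 — 4 statements merged into one kernel-verified Lean document; each statement's English description precedes it below -/
import Mathlib

section
/- Let Φ_0, Φ_1, …, Φ_T : ℝ^N → ℝ be differentiable functions with Φ_0(0) = 0, let θ_1, …, θ_T ∈ ℝ^N, and set Θ_0 = 0 and Θ_t = θ_1 + ⋯ + θ_t. Then the Gradient-Based Prediction Algorithm regret satisfies the identity Φ_0(Θ_T) − Σ_{t=1}^T ⟨∇Φ_t(Θ_{t−1}), θ_t⟩ = (Φ_0(Θ_T) − Φ_T(Θ_T)) + Σ_{t=1}^T [ (Φ_t(Θ_{t−1}) − Φ_{t−1}(Θ_{t−1})) + D_{Φ_t}(Θ_t, Θ_{t−1}) ], where D_{Φ_t}(y,x) = Φ_t(y) − Φ_t(x) − ⟨∇Φ_t(x), y − x⟩ is the Bregman divergence. -/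
open scoped RealInnerProductSpace
open Finset

/-- GBPA regret decomposition (Lemma 2 of the paper): the regret equals the
underestimation penalty plus the sum of overestimation and divergence penalties. -/
theorem gbpa_regret_decomposition {N : ℕ} (T : ℕ)
    (Φ : ℕ → EuclideanSpace ℝ (Fin N) → ℝ)
    (hdiff : ∀ t, Differentiable ℝ (Φ t)) (hΦ0 : Φ 0 0 = 0)
    (θ Θ : ℕ → EuclideanSpace ℝ (Fin N))
    (hΘ0 : Θ 0 = 0) (hΘ : ∀ t, Θ t = ∑ s ∈ Finset.Icc 1 t, θ s) :
    Φ 0 (Θ T) - ∑ t ∈ Finset.Icc 1 T, ⟪gradient (Φ t) (Θ (t - 1)), θ t⟫ =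
      (Φ 0 (Θ T) - Φ T (Θ T)) +
        ∑ t ∈ Finset.Icc 1 T,
          ((Φ t (Θ (t - 1)) - Φ (t - 1) (Θ (t - 1))) +
            (Φ t (Θ t) - Φ t (Θ (t - 1)) -
              ⟪gradient (Φ t) (Θ (t - 1)), Θ t - Θ (t - 1)⟫)) := by
  induction T with
  | zero => simp [hΘ0, hΦ0]
  | succ T ih =>
      have hstep : Θ (T + 1) - Θ T = θ (T + 1) := by
        rw [hΘ (T + 1), hΘ T, Finset.sum_Icc_succ_top (by omega : 1 ≤ T + 1)]
        abel
      rw [Finset.sum_Icc_succ_top (by omega : 1 ≤ T + 1),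
        Finset.sum_Icc_succ_top (by omega : 1 ≤ T + 1)]
      simp only [Nat.add_sub_cancel, hstep]
      linarith [ih]
end

section
/- Let R : [0,1] → ℝ be a differentiable strictly convex function with R(0) = 0. Then there exists a Borel probability measure μ on ℝ such that for every Θ ∈ ℝ, max_{w ∈ [0,1]} (wΘ − R(w)) = ∫ max(Θ + u, 0) dμ(u); that is, the Follow-the-Regularized-Leader potential with regularizer R coincides with the Follow-the-Perturbed-Leader potential with perturbation distribution μ for the one-dimensional problem with decision set [0,1]. -/
open MeasureTheory Set

/-- Monotonicity of the derivative of a convex differentiable function on `[0,1]`. -/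
lemma deriv_monoOn_aux {R : ℝ → ℝ} (hconv : StrictConvexOn ℝ (Set.Icc 0 1) R)
    (hdiff : DifferentiableOn ℝ R (Set.Icc 0 1)) :
    MonotoneOn (derivWithin R (Set.Icc 0 1)) (Set.Icc (0:ℝ) 1) := by
  intro x hx y hy hxy
  rcases eq_or_lt_of_le hxy with rfl | hlt
  · exact le_rfl
  · exact (hconv.convexOn.derivWithin_le_slope hx hy hlt (hdiff x hx)).trans
      (hconv.convexOn.slope_le_derivWithin hx hy hlt (hdiff y hy))

/-- FTRL-to-FTPL direction of the one-dimensional duality (Theorem 4 of the paper):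
any differentiable strictly convex regularizer on [0,1] is realized by a perturbation
distribution. -/
theorem ftrl_to_ftpl_one_dim (R : ℝ → ℝ)
    (hconv : StrictConvexOn ℝ (Set.Icc 0 1) R)
    (hdiff : DifferentiableOn ℝ R (Set.Icc 0 1)) (hR0 : R 0 = 0) :
    ∃ μ : Measure ℝ, IsProbabilityMeasure μ ∧
      ∀ Θ : ℝ, Integrable (fun u => max (Θ + u) 0) μ ∧
        sSup ((fun w => w * Θ - R w) '' Set.Icc (0:ℝ) 1) = ∫ u, max (Θ + u) 0 ∂μ := by
  set S : Set ℝ := Set.Icc 0 1 with hS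
  set d : ℝ → ℝ := fun w => derivWithin R S w with hd
  have hmono : MonotoneOn d S := deriv_monoOn_aux hconv hdiff
  -- clamped extension of `d`, globally monotone
  set c : ℝ → ℝ := fun w => max 0 (min 1 w) with hc
  have hcmem : ∀ w, c w ∈ S := fun w => ⟨le_max_left _ _, by
    simp only [hc, max_le_iff]; exact ⟨zero_le_one, min_le_left _ _⟩⟩
  have hceq : ∀ w ∈ S, c w = w := by
    intro w hw
    simp only [hc]
    rw [min_eq_right hw.2, max_eq_right hw.1]
  set D : ℝ → ℝ := fun w => d (c w) with hD
  have hDmono : Monotone D := by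
    intro x y hxy
    exact hmono (hcmem x) (hcmem y) (max_le_max le_rfl (min_le_min le_rfl hxy))
  have hDmeas : Measurable D := hDmono.measurable
  set ν : Measure ℝ := volume.restrict S with hν
  haveI hνprob : IsProbabilityMeasure ν := ⟨by simp [hν, hS]⟩
  set g : ℝ → ℝ := fun w => -(D w) with hg
  have hgmeas : Measurable g := hDmeas.neg
  refine ⟨ν.map g, Measure.isProbabilityMeasure_map hgmeas.aemeasurable, ?_⟩
  intro Θ
  have hRcont : ContinuousOn R S := hdiff.continuousOn
  -- interval integrability of d on subintervals of S
  have huIcc : ∀ a b : ℝ, a ∈ S → b ∈ S → uIcc a b ⊆ S := by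
    intro a b ha hb
    rw [Set.uIcc, hS]
    exact Set.Icc_subset_Icc (le_inf ha.1 hb.1) (sup_le ha.2 hb.2)
  have hdint : ∀ a b : ℝ, a ∈ S → b ∈ S → IntervalIntegrable d volume a b := by
    intro a b ha hb
    exact (hmono.mono (huIcc a b ha hb)).intervalIntegrable
  -- FTC: R w = ∫ t in 0..w, d t for w ∈ S
  have h0S : (0:ℝ) ∈ S := ⟨le_rfl, zero_le_one⟩
  have h1S : (1:ℝ) ∈ S := ⟨zero_le_one, le_rfl⟩
  have hFTC : ∀ w ∈ S, R w = ∫ t in (0:ℝ)..w, d t := by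
    intro w hw
    have key := intervalIntegral.integral_eq_sub_of_hasDeriv_right_of_le hw.1
      (hRcont.mono (Set.Icc_subset_Icc le_rfl hw.2))
      (fun x hx => by
        have hxS : x ∈ S := ⟨hx.1.le, (hx.2.trans_le hw.2).le⟩
        have hnhds : S ∈ nhds x := by
          rw [hS]
          exact Icc_mem_nhds hx.1 (hx.2.trans_le hw.2)
        exact (((hdiff x hxS).hasDerivWithinAt).hasDerivAt hnhds).hasDerivWithinAt)
      (hdint 0 w h0S hw)
    rw [hR0, sub_zero] at key
    exact key.symm
  -- the integrand
  set f : ℝ → ℝ := fun t => max (Θ - d t) 0 with hf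
  have hfanti : AntitoneOn f S := fun x hx y hy hxy =>
    max_le_max (sub_le_sub_left (hmono hx hy hxy) Θ) le_rfl
  have hfint : ∀ a b : ℝ, a ∈ S → b ∈ S → IntervalIntegrable f volume a b := by
    intro a b ha hb
    exact (hfanti.mono (huIcc a b ha hb)).intervalIntegrable
  -- the threshold point W
  set A : Set ℝ := {w | w ∈ S ∧ d w < Θ} with hA
  set B : Set ℝ := insert 0 A with hB
  have hBne : B.Nonempty := ⟨0, Set.mem_insert _ _⟩
  have hBbdd : ∀ x ∈ B, x ≤ 1 := by
    intro x hx
    rcases hx with rfl | hx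
    · exact zero_le_one
    · exact hx.1.2
  have hBbdd' : BddAbove B := ⟨1, fun x hx => hBbdd x hx⟩
  set W : ℝ := sSup B with hW
  have hW0 : 0 ≤ W := le_csSup hBbdd' (Set.mem_insert _ _)
  have hW1 : W ≤ 1 := csSup_le hBne hBbdd
  have hWS : W ∈ S := ⟨hW0, hW1⟩
  have hlt : ∀ t, 0 ≤ t → t < W → d t < Θ := by
    intro t ht htW
    obtain ⟨s, hsB, hts⟩ := exists_lt_of_lt_csSup hBne htW
    have hsA : s ∈ A := by
      rcases hsB with rfl | h
      · exact absurd hts (not_lt.2 ht)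
      · exact h
    exact lt_of_le_of_lt
      (hmono ⟨ht, (hts.trans_le hsA.1.2).le⟩ hsA.1 hts.le) hsA.2
  have hge : ∀ t ∈ S, W < t → Θ ≤ d t := by
    intro t htS hWt
    by_contra h
    push_neg at h
    exact absurd (le_csSup hBbdd' (Set.mem_insert_of_mem _ ⟨htS, h⟩)) (not_le.2 hWt)
  -- value of the pieces of the integral
  have h1 : ∫ t in (0:ℝ)..W, f t = W * Θ - R W := by
    have hcongr : ∫ t in (0:ℝ)..W, f t = ∫ t in (0:ℝ)..W, (Θ - d t) := by
      apply intervalIntegral.integral_congr_ae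
      have hWne : ∀ᵐ t : ℝ, t ≠ W := by
        refine ae_iff.2 ?_
        simp only [ne_eq, not_not, Set.setOf_eq_eq_singleton]
        exact Real.volume_singleton
      filter_upwards [hWne] with t htW ht
      rw [Set.uIoc_of_le hW0] at ht
      have : d t < Θ := hlt t ht.1.le (lt_of_le_of_ne ht.2 htW)
      simp only [hf]
      rw [max_eq_left (sub_nonneg.2 this.le)]
    rw [hcongr, intervalIntegral.integral_sub intervalIntegrable_const (hdint 0 W h0S hWS),
      intervalIntegral.integral_const, ← hFTC W hWS]
    simp [mul_comm]
  have h2 : ∫ t in W..(1:ℝ), f t = 0 := by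
    rw [intervalIntegral.integral_of_le hW1]
    have : ∀ t ∈ Set.Ioc W 1, f t = 0 := by
      intro t ht
      have htS : t ∈ S := ⟨(hW0.trans ht.1.le), ht.2⟩
      simp only [hf]
      rw [max_eq_right (sub_nonpos.2 (hge t htS ht.1))]
    calc ∫ t in Set.Ioc W 1, f t = ∫ _t in Set.Ioc W 1, (0:ℝ) :=
          setIntegral_congr_fun measurableSet_Ioc this
      _ = 0 := by simp
  have hIval : ∫ t in (0:ℝ)..1, f t = W * Θ - R W := by
    rw [← intervalIntegral.integral_add_adjacent_intervals (hfint 0 W h0S hWS)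
      (hfint W 1 hWS h1S), h1, h2, add_zero]
  -- upper bound
  have hub : ∀ w ∈ S, w * Θ - R w ≤ ∫ t in (0:ℝ)..1, f t := by
    intro w hw
    have e1 : w * Θ - R w = ∫ t in (0:ℝ)..w, (Θ - d t) := by
      rw [intervalIntegral.integral_sub intervalIntegrable_const (hdint 0 w h0S hw),
        intervalIntegral.integral_const, ← hFTC w hw]
      simp [mul_comm]
    have e2 : ∫ t in (0:ℝ)..w, (Θ - d t) ≤ ∫ t in (0:ℝ)..w, f t := by
      apply intervalIntegral.integral_mono_on hw.1
        (intervalIntegrable_const.sub (hdint 0 w h0S hw)) (hfint 0 w h0S hw)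
      intro t _
      exact le_max_left _ _
    have e3 : ∫ t in (0:ℝ)..w, f t ≤ ∫ t in (0:ℝ)..1, f t := by
      rw [← intervalIntegral.integral_add_adjacent_intervals (hfint 0 w h0S hw)
        (hfint w 1 hw h1S)]
      have : 0 ≤ ∫ t in w..(1:ℝ), f t :=
        intervalIntegral.integral_nonneg hw.2 (fun t _ => le_max_right _ _)
      linarith
    linarith [e2, e3, e1.le]
  -- the sSup is the integral
  have hsup : sSup ((fun w => w * Θ - R w) '' S) = ∫ t in (0:ℝ)..1, f t := by
    apply le_antisymm
    · refine csSup_le (Set.Nonempty.image _ ⟨0, h0S⟩) ?_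
      rintro x ⟨w, hw, rfl⟩
      exact hub w hw
    · rw [hIval]
      exact le_csSup ⟨∫ t in (0:ℝ)..1, f t, by
        rintro x ⟨w, hw, rfl⟩; exact hub w hw⟩ ⟨W, hWS, by simpa using hIval.symm⟩
  -- transport to the pushforward measure
  have hfgmeas : Measurable (fun w : ℝ => max (Θ + g w) 0) :=
    (hgmeas.const_add Θ).max measurable_const
  have hcontf : Continuous (fun u : ℝ => max (Θ + u) 0) :=
    (continuous_const.add continuous_id).max continuous_const
  have hFint : Integrable (fun w => max (Θ + g w) 0) ν := by
    refine Integrable.mono' (integrable_const (max (Θ + g 0) 0))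
      hfgmeas.aestronglyMeasurable ?_
    have : ∀ᵐ w ∂ν, w ∈ S := ae_restrict_mem measurableSet_Icc
    filter_upwards [this] with w hw
    rw [Real.norm_eq_abs, abs_of_nonneg (le_max_right _ _)]
    exact max_le_max (add_le_add le_rfl (neg_le_neg (hDmono hw.1))) le_rfl
  have hint : Integrable (fun u => max (Θ + u) 0) (ν.map g) := by
    rw [integrable_map_measure hcontf.aestronglyMeasurable hgmeas.aemeasurable]
    exact hFint
  refine ⟨hint, ?_⟩
  rw [integral_map hgmeas.aemeasurable hcontf.aestronglyMeasurable]
  have heq : ∫ w, max (Θ + g w) 0 ∂ν = ∫ t in (0:ℝ)..1, f t := by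
    have hIcc : ∫ w, max (Θ + g w) 0 ∂ν = ∫ w in S, f w := by
      rw [hν]
      apply setIntegral_congr_fun measurableSet_Icc
      intro w hw
      simp only [hg, hD, hf, hceq w hw]
      ring_nf
    rw [hIcc, hS, integral_Icc_eq_integral_Ioc,
      ← intervalIntegral.integral_of_le zero_le_one]
  rw [heq, hsup]
end

section
/- Let μ be a Borel probability measure on ℝ with a continuous, strictly increasing cumulative distribution function F : ℝ → (0,1) and finite first moment ∫|u| dμ(u) < ∞. Define R : [0,1] → ℝ by R(w) = −∫_0^w F^{−1}(1−z) dz. Then R is convex, and for every Θ ∈ ℝ, max_{w ∈ [0,1]} (wΘ − R(w)) = ∫ max(Θ + u, 0) dμ(u); moreover the maximum is attained at w = 1 − F(−Θ). -/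
open MeasureTheory Set

section Aux

variable (μ : Measure ℝ) [IsProbabilityMeasure μ]
    (F Finv : ℝ → ℝ)
    (hF : ∀ x, F x = (μ (Set.Iic x)).toReal)
    (hFcont : Continuous F) (hFmono : StrictMono F)
    (hFrange : ∀ x, F x ∈ Set.Ioo (0:ℝ) 1)
    (hFinvF : ∀ x, Finv (F x) = x)
    (hFFinv : ∀ y ∈ Set.Ioo (0:ℝ) 1, F (Finv y) = y)
    (hmoment : Integrable (fun u => |u|) μ)

include hF in
lemma meas_Iic : ∀ x, μ (Set.Iic x) = ENNReal.ofReal (F x) := by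
  intro x
  rw [hF x, ENNReal.ofReal_toReal (measure_ne_top μ _)]

include hF in
lemma meas_Ioi : ∀ x, μ (Set.Ioi x) = ENNReal.ofReal (1 - F x) := by
  intro x
  have h1 : μ (Set.Ioi x) = 1 - μ (Set.Iic x) := by
    rw [← Set.compl_Iic, measure_compl measurableSet_Iic (measure_ne_top μ _), measure_univ]
  rw [h1, meas_Iic μ F hF, ENNReal.ofReal_sub _ (by
    rw [hF x]; exact ENNReal.toReal_nonneg), ENNReal.ofReal_one]

include hF hFcont hFmono in
lemma meas_singleton : ∀ x : ℝ, μ {x} = (0 : ENNReal) := by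
  intro x
  have key : ∀ y < x, (μ {x}).toReal ≤ F x - F y := by
    intro y hy
    have hsub : {x} ⊆ Set.Iic x \ Set.Iic y := by
      intro z hz; simp only [Set.mem_singleton_iff] at hz; subst hz
      exact ⟨Set.mem_Iic.2 le_rfl, by simp [hy.not_ge]⟩
    have hdiff : μ (Set.Iic x \ Set.Iic y) = ENNReal.ofReal (F x - F y) := by
      rw [measure_diff (Set.Iic_subset_Iic.2 hy.le) measurableSet_Iic.nullMeasurableSet
        (measure_ne_top μ _), meas_Iic μ F hF, meas_Iic μ F hF,
        ← ENNReal.ofReal_sub _ (by rw [hF y]; exact ENNReal.toReal_nonneg)]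
    calc (μ {x}).toReal ≤ (μ (Set.Iic x \ Set.Iic y)).toReal := by
          apply ENNReal.toReal_mono (by rw [hdiff]; exact ENNReal.ofReal_ne_top)
          exact measure_mono hsub
      _ ≤ F x - F y := by rw [hdiff, ENNReal.toReal_ofReal (by linarith [(hFmono hy).le] : (0:ℝ) ≤ F x - F y)]
  have htend : Filter.Tendsto (fun n : ℕ => F x - F (x - 1/(n+1))) Filter.atTop (nhds 0) := by
    have : Filter.Tendsto (fun n : ℕ => x - 1/(n+1)) Filter.atTop (nhds x) := by
      have := tendsto_one_div_add_atTop_nhds_zero_nat (𝕜 := ℝ)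
      have h2 := Filter.Tendsto.const_sub x this
      simpa using h2
    have := ((hFcont.tendsto x).comp this).const_sub (F x)
    simpa using this
  have hle : (μ {x}).toReal ≤ 0 := by
    apply ge_of_tendsto htend
    filter_upwards with n
    apply key
    have : (0:ℝ) < 1/(n+1) := by positivity
    linarith
  have := ENNReal.toReal_nonneg (a := μ {x})
  have h0 : (μ {x}).toReal = 0 := le_antisymm hle this
  exact (ENNReal.toReal_eq_zero_iff _).1 h0 |>.resolve_right (measure_ne_top μ _)

include hF hFcont hFmono in
lemma meas_Iio : ∀ x, μ (Set.Iio x) = ENNReal.ofReal (F x) := by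
  intro x
  have : Set.Iio x = Set.Iic x \ {x} := by ext z; simp [lt_iff_le_and_ne]
  rw [this, measure_diff_null (meas_singleton μ F hF hFcont hFmono x), meas_Iic μ F hF]

include hFmono hFFinv in
lemma finv_anti : AntitoneOn (fun z => Finv (1 - z)) (Set.Ioo (0:ℝ) 1) := by
  intro a ha b hb hab
  have ha' : (1:ℝ) - a ∈ Set.Ioo (0:ℝ) 1 := ⟨by linarith [ha.2], by linarith [ha.1]⟩
  have hb' : (1:ℝ) - b ∈ Set.Ioo (0:ℝ) 1 := ⟨by linarith [hb.2], by linarith [hb.1]⟩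
  have := hFmono.le_iff_le (a := Finv (1-b)) (b := Finv (1-a))
  rw [hFFinv _ hb', hFFinv _ ha'] at this
  exact this.1 (by linarith)

end Aux

section Aux2

variable (μ : Measure ℝ) [IsProbabilityMeasure μ]
    (F Finv : ℝ → ℝ)
    (hF : ∀ x, F x = (μ (Set.Iic x)).toReal)
    (hFcont : Continuous F) (hFmono : StrictMono F)
    (hFrange : ∀ x, F x ∈ Set.Ioo (0:ℝ) 1)
    (hFinvF : ∀ x, Finv (F x) = x)
    (hFFinv : ∀ y ∈ Set.Ioo (0:ℝ) 1, F (Finv y) = y)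
    (hmoment : Integrable (fun u => |u|) μ)

include hF in
lemma layercake_mu (Θ : ℝ) :
    ∫⁻ u, ENNReal.ofReal (max (Θ + u) 0) ∂μ
      = ∫⁻ t in Set.Ioi (0:ℝ), ENNReal.ofReal (1 - F (t - Θ)) := by
  rw [lintegral_eq_lintegral_meas_lt μ (f := fun u => max (Θ + u) 0)
    (Filter.Eventually.of_forall fun u => le_max_right _ _) (by fun_prop)]
  apply setLIntegral_congr_fun measurableSet_Ioi
  intro t ht
  dsimp only
  have hset : {u : ℝ | t < max (Θ + u) 0} = Set.Ioi (t - Θ) := by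
    ext u
    simp only [Set.mem_setOf_eq, Set.mem_Ioi, lt_max_iff]
    constructor
    · rintro (h | h); · linarith
      · exact absurd h (not_lt.2 ht.le)
    · intro h; left; linarith
  rw [hset, meas_Ioi μ F hF]

include hFmono hFrange hFFinv in
lemma layercake_leb (Θ : ℝ) :
    ∫⁻ z in Set.Ioo (0:ℝ) 1, ENNReal.ofReal (max (Θ + Finv (1 - z)) 0)
      = ∫⁻ t in Set.Ioi (0:ℝ), ENNReal.ofReal (1 - F (t - Θ)) := by
  have hanti : AntitoneOn (fun z => max (Θ + Finv (1 - z)) 0) (Set.Ioo (0:ℝ) 1) := by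
    intro a ha b hb hab
    exact max_le_max (by linarith [finv_anti F Finv hFmono hFFinv ha hb hab]) le_rfl
  rw [lintegral_eq_lintegral_meas_lt _ (f := fun z => max (Θ + Finv (1 - z)) 0)
    (Filter.Eventually.of_forall fun u => le_max_right _ _)
    (aemeasurable_restrict_of_antitoneOn measurableSet_Ioo hanti)]
  apply setLIntegral_congr_fun measurableSet_Ioi
  intro t ht
  dsimp only
  rw [Measure.restrict_apply₀']
  · have hset : {z : ℝ | t < max (Θ + Finv (1 - z)) 0} ∩ Set.Ioo 0 1
        = Set.Ioo (0:ℝ) (1 - F (t - Θ)) := by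
      ext z
      simp only [Set.mem_inter_iff, Set.mem_setOf_eq, Set.mem_Ioo, lt_max_iff]
      constructor
      · rintro ⟨(h | h), hz0, hz1⟩
        · have h1z : (1:ℝ) - z ∈ Set.Ioo (0:ℝ) 1 := ⟨by linarith, by linarith⟩
          have : F (t - Θ) < F (Finv (1 - z)) := hFmono (by linarith)
          rw [hFFinv _ h1z] at this
          exact ⟨hz0, by linarith⟩
        · exact absurd h (not_lt.2 ht.le)
      · rintro ⟨hz0, hz⟩
        have hFt := hFrange (t - Θ)
        have hz1 : z < 1 := by linarith [hFt.1]
        have h1z : (1:ℝ) - z ∈ Set.Ioo (0:ℝ) 1 := ⟨by linarith, by linarith⟩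
        refine ⟨Or.inl ?_, hz0, hz1⟩
        have : F (t - Θ) < F (Finv (1 - z)) := by rw [hFFinv _ h1z]; linarith
        have := hFmono.lt_iff_lt.1 this
        linarith
    rw [hset, Real.volume_Ioo, sub_zero]
  · exact measurableSet_Ioo.nullMeasurableSet

include hF hFcont hFmono in
lemma layercake_mu_neg :
    ∫⁻ u, ENNReal.ofReal (max (-u) 0) ∂μ
      = ∫⁻ t in Set.Ioi (0:ℝ), ENNReal.ofReal (F (-t)) := by
  rw [lintegral_eq_lintegral_meas_lt μ (f := fun u => max (-u) 0)
    (Filter.Eventually.of_forall fun u => le_max_right _ _) (by fun_prop)]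
  apply setLIntegral_congr_fun measurableSet_Ioi
  intro t ht
  dsimp only
  have hset : {u : ℝ | t < max (-u) 0} = Set.Iio (-t) := by
    ext u
    simp only [Set.mem_setOf_eq, Set.mem_Iio, lt_max_iff]
    constructor
    · rintro (h | h); · linarith
      · exact absurd h (not_lt.2 ht.le)
    · intro h; left; linarith
  rw [hset, meas_Iio μ F hF hFcont hFmono]

include hFmono hFrange hFFinv in
lemma layercake_leb_neg :
    ∫⁻ z in Set.Ioo (0:ℝ) 1, ENNReal.ofReal (max (-Finv (1 - z)) 0)
      = ∫⁻ t in Set.Ioi (0:ℝ), ENNReal.ofReal (F (-t)) := by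
  have hmono : MonotoneOn (fun z => max (-Finv (1 - z)) 0) (Set.Ioo (0:ℝ) 1) := by
    intro a ha b hb hab
    exact max_le_max (by linarith [finv_anti F Finv hFmono hFFinv ha hb hab]) le_rfl
  rw [lintegral_eq_lintegral_meas_lt _ (f := fun z => max (-Finv (1 - z)) 0)
    (Filter.Eventually.of_forall fun u => le_max_right _ _)
    (aemeasurable_restrict_of_monotoneOn measurableSet_Ioo hmono)]
  apply setLIntegral_congr_fun measurableSet_Ioi
  intro t ht
  dsimp only
  rw [Measure.restrict_apply₀']
  · have hset : {z : ℝ | t < max (-Finv (1 - z)) 0} ∩ Set.Ioo 0 1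
        = Set.Ioo (1 - F (-t)) 1 := by
      ext z
      simp only [Set.mem_inter_iff, Set.mem_setOf_eq, Set.mem_Ioo, lt_max_iff]
      constructor
      · rintro ⟨(h | h), hz0, hz1⟩
        · have h1z : (1:ℝ) - z ∈ Set.Ioo (0:ℝ) 1 := ⟨by linarith, by linarith⟩
          have : F (Finv (1 - z)) < F (-t) := hFmono (by linarith)
          rw [hFFinv _ h1z] at this
          exact ⟨by linarith, hz1⟩
        · exact absurd h (not_lt.2 ht.le)
      · rintro ⟨hz0, hz1⟩
        have hFt := hFrange (-t)
        have hz0' : 0 < z := by linarith [hFt.2]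
        have h1z : (1:ℝ) - z ∈ Set.Ioo (0:ℝ) 1 := ⟨by linarith, by linarith⟩
        refine ⟨Or.inl ?_, hz0', hz1⟩
        have : F (Finv (1 - z)) < F (-t) := by rw [hFFinv _ h1z]; linarith
        have := hFmono.lt_iff_lt.1 this
        linarith
    rw [hset, Real.volume_Ioo]
    ring_nf
  · exact measurableSet_Ioo.nullMeasurableSet

end Aux2

section Aux3

variable (μ : Measure ℝ) [IsProbabilityMeasure μ]
    (F Finv : ℝ → ℝ)
    (hF : ∀ x, F x = (μ (Set.Iic x)).toReal)
    (hFcont : Continuous F) (hFmono : StrictMono F)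
    (hFrange : ∀ x, F x ∈ Set.Ioo (0:ℝ) 1)
    (hFinvF : ∀ x, Finv (F x) = x)
    (hFFinv : ∀ y ∈ Set.Ioo (0:ℝ) 1, F (Finv y) = y)
    (hmoment : Integrable (fun u => |u|) μ)

include hmoment in
lemma integrable_pos_mu (Θ : ℝ) : Integrable (fun u => max (Θ + u) 0) μ := by
  apply Integrable.mono' ((integrable_const |Θ|).add hmoment)
    ((measurable_const.add measurable_id').max measurable_const).aestronglyMeasurable
  filter_upwards with u
  simp only [Pi.add_apply]
  rw [Real.norm_eq_abs, abs_of_nonneg (le_max_right _ _)]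
  apply max_le (add_le_add (le_abs_self _) (le_abs_self _)) (by positivity)

include hmoment in
lemma integrable_neg_mu : Integrable (fun u => max (-u) 0) μ := by
  apply Integrable.mono' hmoment (measurable_neg.max measurable_const).aestronglyMeasurable
  filter_upwards with u
  rw [Real.norm_eq_abs, abs_of_nonneg (le_max_right _ _)]
  exact max_le (neg_le_abs u) (abs_nonneg u)

include hF hFcont hFmono hFrange hFFinv hmoment in
lemma integrableOn_finv :
    IntegrableOn (fun z => Finv (1 - z)) (Set.Ioo (0:ℝ) 1) volume := by
  have hmeas : AEMeasurable (fun z => Finv (1 - z)) (volume.restrict (Set.Ioo (0:ℝ) 1)) :=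
    aemeasurable_restrict_of_antitoneOn measurableSet_Ioo (finv_anti F Finv hFmono hFFinv)
  refine ⟨hmeas.aestronglyMeasurable, ?_⟩
  rw [hasFiniteIntegral_iff_norm]
  have habs : ∀ z : ℝ, ENNReal.ofReal ‖Finv (1 - z)‖
      = ENNReal.ofReal (max (Finv (1 - z)) 0) + ENNReal.ofReal (max (-Finv (1 - z)) 0) := by
    intro z
    rw [← ENNReal.ofReal_add (le_max_right _ _) (le_max_right _ _)]
    congr 1
    rw [Real.norm_eq_abs]
    rcases le_total (Finv (1 - z)) 0 with h | h
    · rw [abs_of_nonpos h, max_eq_right h, max_eq_left (by linarith), zero_add]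
    · rw [abs_of_nonneg h, max_eq_left h, max_eq_right (by linarith), add_zero]
  calc ∫⁻ z in Set.Ioo (0:ℝ) 1, ENNReal.ofReal ‖Finv (1 - z)‖
      = ∫⁻ z in Set.Ioo (0:ℝ) 1,
          (ENNReal.ofReal (max (Finv (1 - z)) 0) + ENNReal.ofReal (max (-Finv (1 - z)) 0)) := by
        exact lintegral_congr fun z => habs z
    _ = (∫⁻ z in Set.Ioo (0:ℝ) 1, ENNReal.ofReal (max (Finv (1 - z)) 0))
        + ∫⁻ z in Set.Ioo (0:ℝ) 1, ENNReal.ofReal (max (-Finv (1 - z)) 0) := by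
        apply lintegral_add_left'
        exact ENNReal.measurable_ofReal.comp_aemeasurable (hmeas.max aemeasurable_const)
    _ < ⊤ := by
        have h1 : (∫⁻ z in Set.Ioo (0:ℝ) 1, ENNReal.ofReal (max (Finv (1 - z)) 0))
            = ∫⁻ u, ENNReal.ofReal (max (0 + u) 0) ∂μ := by
          rw [layercake_mu μ F hF 0]
          rw [← layercake_leb F Finv hFmono hFrange hFFinv 0]
          simp
        have h2 : (∫⁻ z in Set.Ioo (0:ℝ) 1, ENNReal.ofReal (max (-Finv (1 - z)) 0))
            = ∫⁻ u, ENNReal.ofReal (max (-u) 0) ∂μ := by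
          rw [layercake_mu_neg μ F hF hFcont hFmono]
          rw [← layercake_leb_neg F Finv hFmono hFrange hFFinv]
        rw [h1, h2]
        exact ENNReal.add_lt_top.2 ⟨(integrable_pos_mu μ hmoment 0).lintegral_lt_top,
          (integrable_neg_mu μ hmoment).lintegral_lt_top⟩

include hFmono hFFinv in
lemma aesm_max (Θ : ℝ) : AEStronglyMeasurable (fun z => max (Θ + Finv (1 - z)) 0)
    (volume.restrict (Set.Ioo (0:ℝ) 1)) := by
  have hanti : AntitoneOn (fun z => max (Θ + Finv (1 - z)) 0) (Set.Ioo (0:ℝ) 1) := by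
    intro a ha b hb hab
    exact max_le_max (by linarith [finv_anti F Finv hFmono hFFinv ha hb hab]) le_rfl
  exact (aemeasurable_restrict_of_antitoneOn measurableSet_Ioo hanti).aestronglyMeasurable

include hF hFmono hFrange hFFinv in
lemma integral_max_eq (Θ : ℝ) :
    ∫ z in Set.Ioo (0:ℝ) 1, max (Θ + Finv (1 - z)) 0 = ∫ u, max (Θ + u) 0 ∂μ := by
  rw [integral_eq_lintegral_of_nonneg_ae (f := fun z => max (Θ + Finv (1 - z)) 0)
      (Filter.Eventually.of_forall fun z => le_max_right _ _)
      (aesm_max F Finv hFmono hFFinv Θ),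
    integral_eq_lintegral_of_nonneg_ae (f := fun u => max (Θ + u) 0)
      (Filter.Eventually.of_forall fun u => le_max_right _ _)
      ((measurable_const.add measurable_id').max measurable_const).aestronglyMeasurable,
    layercake_leb F Finv hFmono hFrange hFFinv Θ, layercake_mu μ F hF Θ]

end Aux3

/-- FTPL-to-FTRL direction of the one-dimensional duality (Theorem 4 of the paper):
a perturbation distribution with continuous strictly increasing CDF and finite first
moment induces, via R(w) = -∫₀ʷ F⁻¹(1-z) dz, a convex regularizer whose FTRL potential
equals the FTPL potential, with the maximum attained at w = 1 - F(-Θ). -/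
theorem ftpl_to_ftrl_one_dim (μ : Measure ℝ) [IsProbabilityMeasure μ]
    (F Finv : ℝ → ℝ)
    (hF : ∀ x, F x = (μ (Set.Iic x)).toReal)
    (hFcont : Continuous F) (hFmono : StrictMono F)
    (hFrange : ∀ x, F x ∈ Set.Ioo (0:ℝ) 1)
    (hFinvF : ∀ x, Finv (F x) = x)
    (hFFinv : ∀ y ∈ Set.Ioo (0:ℝ) 1, F (Finv y) = y)
    (hmoment : Integrable (fun u => |u|) μ)
    (R : ℝ → ℝ) (hR : ∀ w, R w = -∫ z in (0:ℝ)..w, Finv (1 - z)) :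
    ConvexOn ℝ (Set.Icc 0 1) R ∧
      ∀ Θ : ℝ,
        IsGreatest ((fun w => w * Θ - R w) '' Set.Icc (0:ℝ) 1)
          (∫ u, max (Θ + u) 0 ∂μ) ∧
        (1 - F (-Θ)) * Θ - R (1 - F (-Θ)) = ∫ u, max (Θ + u) 0 ∂μ := by
  have hInt : IntegrableOn (fun z => Finv (1 - z)) (Set.Ioo (0:ℝ) 1) volume :=
    integrableOn_finv μ F Finv hF hFcont hFmono hFrange hFFinv hmoment
  -- transfer of integrability to subintervals
  have hIoc : ∀ (f : ℝ → ℝ), IntegrableOn f (Set.Ioo (0:ℝ) 1) volume →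
      ∀ a b : ℝ, 0 ≤ a → b ≤ 1 → IntegrableOn f (Set.Ioc a b) volume := by
    intro f hf a b ha hb
    have h1 : IntegrableOn f (Set.Ioo a b) volume :=
      hf.mono_set fun z hz => ⟨lt_of_le_of_lt ha hz.1, lt_of_lt_of_le hz.2 hb⟩
    exact h1.congr_set_ae Ioo_ae_eq_Ioc.symm
  have hII : ∀ a b : ℝ, 0 ≤ a → a ≤ b → b ≤ 1 →
      IntervalIntegrable (fun z => Finv (1 - z)) volume a b := by
    intro a b ha hab hb
    rw [intervalIntegrable_iff_integrableOn_Ioc_of_le hab]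
    exact hIoc _ hInt a b ha hb
  -- monotonicity comparison on open subintervals
  have hcompare : ∀ x y : ℝ, 0 ≤ x → x < y → y ≤ 1 → ∀ c : ℝ, (1:ℝ) - c ∈ Set.Ioo (0:ℝ) 1 →
      ((∀ z ∈ Set.Ioo x y, c ≤ z) →
        ∫ t in x..y, Finv (1 - t) ≤ (y - x) * Finv (1 - c)) ∧
      ((∀ z ∈ Set.Ioo x y, z ≤ c) →
        (y - x) * Finv (1 - c) ≤ ∫ t in x..y, Finv (1 - t)) := by
    intro x y hx hxy hy c hc
    have hsub : Set.Ioo x y ⊆ Set.Ioo (0:ℝ) 1 :=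
      fun z hz => ⟨lt_of_le_of_lt hx hz.1, lt_of_lt_of_le hz.2 hy⟩
    have hIoox : IntegrableOn (fun z => Finv (1 - z)) (Set.Ioo x y) volume :=
      hInt.mono_set hsub
    have hconst : IntegrableOn (fun _ : ℝ => Finv (1 - c)) (Set.Ioo x y) volume :=
      integrableOn_const (by rw [Real.volume_Ioo]; exact ENNReal.ofReal_ne_top)
    have hvol : ∫ _ in Set.Ioo x y, Finv (1 - c) = (y - x) * Finv (1 - c) := by
      rw [setIntegral_const, Real.volume_real_Ioo_of_le hxy.le]
      simp [smul_eq_mul]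
    have hrw : ∫ t in x..y, Finv (1 - t) = ∫ t in Set.Ioo x y, Finv (1 - t) := by
      rw [intervalIntegral.integral_of_le hxy.le, integral_Ioc_eq_integral_Ioo]
    constructor
    · intro hle
      rw [hrw, ← hvol]
      apply setIntegral_mono_on hIoox hconst measurableSet_Ioo
      intro z hz
      have hz1 : (1:ℝ) - z ∈ Set.Ioo (0:ℝ) 1 := by
        have := hsub hz; exact ⟨by linarith [this.2], by linarith [this.1]⟩
      have := hFmono.le_iff_le (a := Finv (1 - z)) (b := Finv (1 - c))
      rw [hFFinv _ hz1, hFFinv _ hc] at this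
      exact this.1 (by linarith [hle z hz])
    · intro hle
      rw [hrw, ← hvol]
      apply setIntegral_mono_on hconst hIoox measurableSet_Ioo
      intro z hz
      have hz1 : (1:ℝ) - z ∈ Set.Ioo (0:ℝ) 1 := by
        have := hsub hz; exact ⟨by linarith [this.2], by linarith [this.1]⟩
      have := hFmono.le_iff_le (a := Finv (1 - c)) (b := Finv (1 - z))
      rw [hFFinv _ hz1, hFFinv _ hc] at this
      exact this.1 (by linarith [hle z hz])
  constructor
  · -- convexity
    apply convexOn_of_slope_mono_adjacent (convex_Icc 0 1)
    intro x y z hx hz hxy hyz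
    have hy0 : 0 < y := lt_of_le_of_lt hx.1 hxy
    have hy1 : y < 1 := lt_of_lt_of_le hyz hz.2
    have hyI : (1:ℝ) - y ∈ Set.Ioo (0:ℝ) 1 := ⟨by linarith, by linarith⟩
    have hadd : (∫ t in (0:ℝ)..x, Finv (1 - t)) + ∫ t in x..y, Finv (1 - t)
        = ∫ t in (0:ℝ)..y, Finv (1 - t) :=
      intervalIntegral.integral_add_adjacent_intervals
        (hII 0 x le_rfl hx.1 (by linarith)) (hII x y hx.1 hxy.le (by linarith))
    have hadd2 : (∫ t in (0:ℝ)..y, Finv (1 - t)) + ∫ t in y..z, Finv (1 - t)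
        = ∫ t in (0:ℝ)..z, Finv (1 - t) :=
      intervalIntegral.integral_add_adjacent_intervals
        (hII 0 y le_rfl hy0.le (by linarith)) (hII y z hy0.le hyz.le hz.2)
    have h1 : (y - x) * Finv (1 - y) ≤ ∫ t in x..y, Finv (1 - t) :=
      (hcompare x y hx.1 hxy (by linarith) y hyI).2 fun u hu => hu.2.le
    have h2 : ∫ t in y..z, Finv (1 - t) ≤ (z - y) * Finv (1 - y) :=
      (hcompare y z hy0.le hyz hz.2 y hyI).1 fun u hu => hu.1.le
    rw [hR x, hR y, hR z]
    rw [div_le_div_iff₀ (by linarith) (by linarith)]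
    nlinarith [h1, h2, hadd, hadd2]
  · -- the per-Θ statement
    intro Θ
    set w : ℝ := 1 - F (-Θ) with hwdef
    have hFw := hFrange (-Θ)
    have hw : w ∈ Set.Ioo (0:ℝ) 1 := ⟨by simp only [hwdef]; linarith [hFw.2],
      by simp only [hwdef]; linarith [hFw.1]⟩
    have hwmem : w ∈ Set.Icc (0:ℝ) 1 := ⟨hw.1.le, hw.2.le⟩
    -- key formula
    have hkey : ∀ v ∈ Set.Icc (0:ℝ) 1,
        v * Θ - R v = ∫ z in Set.Ioo (0:ℝ) v, (Θ + Finv (1 - z)) := by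
      intro v hv
      have hiv : IntervalIntegrable (fun z => Finv (1 - z)) volume 0 v :=
        hII 0 v le_rfl hv.1 hv.2
      have hsum : ∫ z in (0:ℝ)..v, (Θ + Finv (1 - z))
          = (∫ _ in (0:ℝ)..v, Θ) + ∫ z in (0:ℝ)..v, Finv (1 - z) :=
        intervalIntegral.integral_add intervalIntegrable_const hiv
      have hconst : ∫ _ in (0:ℝ)..v, Θ = v * Θ := by
        rw [intervalIntegral.integral_const]; ring_nf
      have hIoo : ∫ z in (0:ℝ)..v, (Θ + Finv (1 - z))
          = ∫ z in Set.Ioo (0:ℝ) v, (Θ + Finv (1 - z)) := by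
        rw [intervalIntegral.integral_of_le hv.1, integral_Ioc_eq_integral_Ioo]
      rw [hR v, ← hIoo, hsum, hconst]
      ring
    -- integrability of the max integrand
    have hIntmax : IntegrableOn (fun z => max (Θ + Finv (1 - z)) 0) (Set.Ioo (0:ℝ) 1) volume := by
      apply Integrable.mono'
        (g := fun z => |Θ| + |Finv (1 - z)|)
        ((integrableOn_const (by rw [Real.volume_Ioo]; exact ENNReal.ofReal_ne_top)).add
          hInt.abs)
        (aesm_max F Finv hFmono hFFinv Θ)
      filter_upwards with u
      rw [Real.norm_eq_abs, abs_of_nonneg (le_max_right _ _)]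
      apply max_le (add_le_add (le_abs_self _) (le_abs_self _)) (by positivity)
    have hIntlin : IntegrableOn (fun z => Θ + Finv (1 - z)) (Set.Ioo (0:ℝ) 1) volume :=
      (integrableOn_const (by rw [Real.volume_Ioo]; exact ENNReal.ofReal_ne_top)).add
        hInt
    -- upper bound
    have hUB : ∀ v ∈ Set.Icc (0:ℝ) 1,
        ∫ z in Set.Ioo (0:ℝ) v, (Θ + Finv (1 - z))
          ≤ ∫ z in Set.Ioo (0:ℝ) 1, max (Θ + Finv (1 - z)) 0 := by
      intro v hv
      have hsub : Set.Ioo (0:ℝ) v ⊆ Set.Ioo (0:ℝ) 1 := Set.Ioo_subset_Ioo le_rfl hv.2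
      calc ∫ z in Set.Ioo (0:ℝ) v, (Θ + Finv (1 - z))
          ≤ ∫ z in Set.Ioo (0:ℝ) v, max (Θ + Finv (1 - z)) 0 := by
            apply setIntegral_mono_on (hIntlin.mono_set hsub) (hIntmax.mono_set hsub)
              measurableSet_Ioo
            intro z _; exact le_max_left _ _
        _ ≤ ∫ z in Set.Ioo (0:ℝ) 1, max (Θ + Finv (1 - z)) 0 := by
            apply setIntegral_mono_set hIntmax
              (Filter.Eventually.of_forall fun z => le_max_right _ _)
              (HasSubset.Subset.eventuallyLE hsub)
    -- equality at w
    have hEQ : ∫ z in Set.Ioo (0:ℝ) 1, max (Θ + Finv (1 - z)) 0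
        = ∫ z in Set.Ioo (0:ℝ) w, (Θ + Finv (1 - z)) := by
      have hsplit : ∫ z in Set.Ioc (0:ℝ) 1, max (Θ + Finv (1 - z)) 0
          = (∫ z in Set.Ioc (0:ℝ) w, max (Θ + Finv (1 - z)) 0)
            + ∫ z in Set.Ioc w 1, max (Θ + Finv (1 - z)) 0 := by
        rw [← Set.Ioc_union_Ioc_eq_Ioc hw.1.le hw.2.le]
        exact setIntegral_union (Set.Ioc_disjoint_Ioc_of_le le_rfl) measurableSet_Ioc
          (hIoc _ hIntmax 0 w le_rfl hw.2.le) (hIoc _ hIntmax w 1 hw.1.le le_rfl)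
      have h2zero : ∫ z in Set.Ioc w 1, max (Θ + Finv (1 - z)) 0 = 0 := by
        rw [integral_Ioc_eq_integral_Ioo]
        rw [setIntegral_congr_fun measurableSet_Ioo (g := fun _ => (0:ℝ)) ?_]
        · simp
        · intro z hz
          have h1z : (1:ℝ) - z ∈ Set.Ioo (0:ℝ) 1 := ⟨by linarith [hz.2], by
            linarith [hz.1, hw.1]⟩
          have : F (Finv (1 - z)) < F (-Θ) := by
            rw [hFFinv _ h1z]; simp only [hwdef] at hz; linarith [hz.1]
          have := hFmono.lt_iff_lt.1 this
          simp only [max_eq_right (by linarith : Θ + Finv (1 - z) ≤ 0)]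
      have h1eq : ∫ z in Set.Ioc (0:ℝ) w, max (Θ + Finv (1 - z)) 0
          = ∫ z in Set.Ioo (0:ℝ) w, (Θ + Finv (1 - z)) := by
        rw [integral_Ioc_eq_integral_Ioo]
        apply setIntegral_congr_fun measurableSet_Ioo
        intro z hz
        have h1z : (1:ℝ) - z ∈ Set.Ioo (0:ℝ) 1 := ⟨by linarith [hz.2, hw.2], by
          linarith [hz.1]⟩
        have : F (-Θ) < F (Finv (1 - z)) := by
          rw [hFFinv _ h1z]; simp only [hwdef] at hz; linarith [hz.2]
        have := hFmono.lt_iff_lt.1 this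
        exact max_eq_left (by linarith)
      rw [← integral_Ioc_eq_integral_Ioo, hsplit, h2zero, h1eq, add_zero]
    have hΦ : ∫ z in Set.Ioo (0:ℝ) 1, max (Θ + Finv (1 - z)) 0 = ∫ u, max (Θ + u) 0 ∂μ :=
      integral_max_eq μ F Finv hF hFmono hFrange hFFinv Θ
    have hatw : w * Θ - R w = ∫ u, max (Θ + u) 0 ∂μ := by
      rw [hkey w hwmem, ← hEQ, hΦ]
    refine ⟨⟨⟨w, hwmem, hatw⟩, ?_⟩, hatw⟩
    rintro y ⟨v, hv, rfl⟩
    simp only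
    rw [hkey v hv, ← hΦ]
    exact hUB v hv
end

section
/- Let Φ : ℝ^N → ℝ be sublinear, i.e., positively homogeneous (Φ(a x) = a Φ(x) for all a > 0) and subadditive (Φ(x + y) ≤ Φ(x) + Φ(y)), and measurable. Let μ be a Borel probability measure on ℝ^N such that u ↦ Φ(Θ + ηu) is μ-integrable for every Θ ∈ ℝ^N and η ≥ 0. Let 0 = η_0 ≤ η_1 ≤ ⋯ ≤ η_T be nondecreasing nonnegative reals and Θ_0, …, Θ_{T−1} ∈ ℝ^N arbitrary. Then Σ_{t=1}^T [ ∫ Φ(Θ_{t−1} + η_t u) dμ(u) − ∫ Φ(Θ_{t−1} + η_{t−1} u) dμ(u) ] ≤ η_T ∫ Φ(u) dμ(u). -/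
open MeasureTheory

/-- Lemma 7 of the paper: for a sublinear potential and nondecreasing scaling
parameters with `η 0 = 0`, the overestimation penalty of stochastic smoothing
telescopes to at most `η T ∫ Φ(u) dμ(u)`. -/
theorem overestimation_penalty_time_varying {N : ℕ} (T : ℕ)
    (Φ : EuclideanSpace ℝ (Fin N) → ℝ) (hmeas : Measurable Φ)
    (hhom : ∀ a : ℝ, 0 < a → ∀ x, Φ (a • x) = a * Φ x)
    (hsub : ∀ x y, Φ (x + y) ≤ Φ x + Φ y)
    (μ : Measure (EuclideanSpace ℝ (Fin N))) [IsProbabilityMeasure μ]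
    (hint : ∀ (x : EuclideanSpace ℝ (Fin N)) (c : ℝ), 0 ≤ c →
      Integrable (fun u => Φ (x + c • u)) μ)
    (η : ℕ → ℝ) (hη0 : η 0 = 0) (hηnn : ∀ t, 0 ≤ η t) (hηmono : Monotone η)
    (Θ : ℕ → EuclideanSpace ℝ (Fin N)) :
    ∑ t ∈ Finset.Icc 1 T,
        ((∫ u, Φ (Θ (t - 1) + η t • u) ∂μ) - ∫ u, Φ (Θ (t - 1) + η (t - 1) • u) ∂μ) ≤
      η T * ∫ u, Φ u ∂μ := by
  have hintΦ : Integrable Φ μ := by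
    have := hint 0 1 zero_le_one
    simpa [one_smul] using this
  -- key step bound
  have key : ∀ (x : EuclideanSpace ℝ (Fin N)) (a b : ℝ), 0 ≤ a → a ≤ b →
      (∫ u, Φ (x + b • u) ∂μ) - (∫ u, Φ (x + a • u) ∂μ) ≤ (b - a) * ∫ u, Φ u ∂μ := by
    intro x a b ha hab
    rcases eq_or_lt_of_le hab with rfl | hlt
    · simp
    · have hptw : ∀ u, Φ (x + b • u) ≤ Φ (x + a • u) + (b - a) * Φ u := by
        intro u
        have : x + b • u = (x + a • u) + (b - a) • u := by
          rw [add_assoc, ← add_smul]; ring_nf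
        rw [this]
        calc Φ ((x + a • u) + (b - a) • u) ≤ Φ (x + a • u) + Φ ((b - a) • u) :=
              hsub _ _
          _ = Φ (x + a • u) + (b - a) * Φ u := by rw [hhom _ (by linarith) u]
      have hInt1 : Integrable (fun u => Φ (x + b • u)) μ := hint x b (le_trans ha hab)
      have hInt2 : Integrable (fun u => Φ (x + a • u) + (b - a) * Φ u) μ :=
        (hint x a ha).add (hintΦ.const_mul _)
      have := integral_mono hInt1 hInt2 hptw
      rw [integral_add (hint x a ha) (hintΦ.const_mul _), MeasureTheory.integral_const_mul] at this
      linarith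
  induction T with
  | zero => simp [hη0]
  | succ n ih =>
    rw [Finset.sum_Icc_succ_top (Nat.one_le_iff_ne_zero.mpr (Nat.succ_ne_zero n))]
    have hstep := key (Θ (n + 1 - 1)) (η (n + 1 - 1)) (η (n + 1)) (hηnn _)
      (hηmono (Nat.sub_le _ _))
    have hlast : (η (n+1) - η (n+1-1)) * ∫ u, Φ u ∂μ
        = η (n+1) * ∫ u, Φ u ∂μ - η n * ∫ u, Φ u ∂μ := by
      simp [sub_mul]
    simp only [Nat.add_sub_cancel] at hstep hlast ⊢
    linarith
end
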